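/- A median semilattice is a distributive lattice if and only if it has a maximum element. -/

import Mathlib

/-- A median semilattice is a distributive lattice iff it has a maximum element.
A median semilattice is a (finite, nonempty) meet-semilattice in which
(i) every principal ideal `Set.Iic v` is a distributive lattice, and
(ii) any three elements have a common upper bound whenever each pair does.
"Is a distributive lattice" is rendered as the existence of a join operation
computing least upper bounds and satisfying the distributive law. -/
theorem stmt0 {α : Type*} [SemilatticeInf α] [Finite α] [Nonempty α]
    (hideal : ∀ v : α, ∃ sup : Set.Iic v → Set.Iic v → Set.Iic v,
      (∀ a b : Set.Iic v, IsLUB {a, b} (sup a b)) ∧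
      (∀ a b c : Set.Iic v, a ⊓ sup b c = sup (a ⊓ b) (a ⊓ c)))
    (hupper : ∀ a b c : α,
      (∃ u, a ≤ u ∧ b ≤ u) → (∃ u, a ≤ u ∧ c ≤ u) → (∃ u, b ≤ u ∧ c ≤ u) →
      ∃ u, a ≤ u ∧ b ≤ u ∧ c ≤ u) :
    (∃ sup : α → α → α,
      (∀ a b : α, IsLUB {a, b} (sup a b)) ∧
      (∀ a b c : α, a ⊓ sup b c = sup (a ⊓ b) (a ⊓ c))) ↔
    ∃ m : α, ∀ x : α, x ≤ m := by
  constructor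
  · rintro ⟨sup, hlub, -⟩
    obtain ⟨m, -, hm⟩ := Set.Finite.exists_maximalFor id (Set.univ : Set α) Set.finite_univ
      Set.univ_nonempty
    refine ⟨m, fun x => ?_⟩
    have h1 : m ≤ sup m x := (hlub m x).1 (Set.mem_insert _ _)
    have h2 : x ≤ sup m x := (hlub m x).1 (Set.mem_insert_of_mem _ rfl)
    have : m = sup m x := le_antisymm h1 (hm (Set.mem_univ _) h1)
    exact this ▸ h2
  · rintro ⟨m, hm⟩
    obtain ⟨sup, hlub, hdist⟩ := hideal m
    refine ⟨fun a b => (sup ⟨a, hm a⟩ ⟨b, hm b⟩).1, ?_, ?_⟩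
    · intro b c
      constructor
      · intro x hx
        rcases hx with h | h
        · exact h ▸ ((hlub ⟨b, hm b⟩ ⟨c, hm c⟩).1 (Set.mem_insert _ _))
        · exact h ▸ ((hlub ⟨b, hm b⟩ ⟨c, hm c⟩).1 (Set.mem_insert_of_mem _ rfl))
      · intro u hu
        have hb : b ≤ u := hu (Set.mem_insert _ _)
        have hc : c ≤ u := hu (Set.mem_insert_of_mem _ rfl)
        have hum : (⟨u, hm u⟩ : Set.Iic m) ∈
            upperBounds {(⟨b, hm b⟩ : Set.Iic m), ⟨c, hm c⟩} := by
          intro x hx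
          rcases hx with h | h
          · rw [h]; exact Subtype.mk_le_mk.mpr hb
          · rw [h]; exact Subtype.mk_le_mk.mpr hc
        exact (hlub ⟨b, hm b⟩ ⟨c, hm c⟩).2 hum
    · intro a b c
      have h := hdist ⟨a, hm a⟩ ⟨b, hm b⟩ ⟨c, hm c⟩
      have h2 := congrArg Subtype.val h
      exact h2
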